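/- Let p be an odd prime and set m = (p-1)/2. For integers a, b with m ≤ a ≤ p-1 and m ≤ b ≤ p-1, the binomial coefficient C(a+b, p-1) is divisible by p unless a = b = m, in which case C(a+b, p-1) = 1. -/
import Mathlib


theorem stmt_3 (p : ℕ) (hp : p.Prime) (hodd : Odd p) (m a b : ℕ)
    (hm : m = (p - 1) / 2) (ha1 : m ≤ a) (ha2 : a ≤ p - 1) (hb1 : m ≤ b) (hb2 : b ≤ p - 1) :
    (a = m ∧ b = m → (a + b).choose (p - 1) = 1) ∧
    (¬(a = m ∧ b = m) → p ∣ (a + b).choose (p - 1)) := by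
  have hp2 : 2 ≤ p := hp.two_le
  have h2m : 2 * m = p - 1 := by
    obtain ⟨k, hk⟩ := hodd
    omega
  constructor
  · rintro ⟨ha, hb⟩
    have : a + b = p - 1 := by omega
    rw [this, Nat.choose_self]
  · intro h
    have hab : p ≤ a + b := by
      rcases Nat.eq_or_lt_of_le ha1 with h1 | h1
      · rcases Nat.eq_or_lt_of_le hb1 with h2 | h2
        · exact absurd ⟨h1.symm, h2.symm⟩ h
        · omega
      · omega
    have hr : a + b = (p - 1) + (a + b - (p - 1)) := by omega
    rw [hr]
    exact hp.dvd_choose_add (by omega) (by omega) (by omega)
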